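/- Let X ⊆ ℝⁿ be a nonempty compact convex set, let f : ℝⁿ → ℝ be convex and continuous, pick x⁰ ∈ X and set f̄ = f(x⁰). Define the truncated epigraph set X̄ = { (x, ξ) ∈ ℝⁿ × ℝ : x ∈ X, f(x) ≤ ξ ≤ f̄ } and c̄ = (0,…,0,1) ∈ ℝⁿ⁺¹. Then X̄ is nonempty, compact and convex, min_{x̄ ∈ X̄} c̄·x̄ = min_{x ∈ X} f(x), and for every starting point p⁰ ∈ ℝⁿ⁺¹, min_{x ∈ X} f(x) = lim_{τ → ∞} c̄ · P_{X̄}(p⁰ − τ c̄), where P_{X̄} is the metric projection onto X̄. -/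

import Mathlib

open scoped RealInnerProductSpace
open Filter

/-- Let `X ⊆ ℝⁿ` be nonempty compact convex, `f` convex continuous,
`x⁰ ∈ X`, `f̄ = f x⁰`, `X̄ = {(x, ξ) : x ∈ X, f x ≤ ξ ≤ f̄}` and `c̄ = (0,…,0,1)`.
Then `X̄` is nonempty, compact and convex, `min_{x̄∈X̄} c̄·x̄ = min_{x∈X} f x` (both minima
attained, with common value `v`) and for every `p⁰`,
`min_{x∈X} f x = lim_{τ→∞} c̄ · P_{X̄}(p⁰ − τ c̄)` (the projection `P_{X̄}(p⁰ − τ c̄)`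
being given as a function `P` of `τ` characterized as the distance minimizer).
The product `ℝⁿ × ℝ ≃ ℝⁿ⁺¹` carries the Euclidean (`ℓ²`) inner product via `WithLp 2`. -/
theorem truncated_epigraph_projection_limit
    (n : ℕ) (X : Set (EuclideanSpace ℝ (Fin n)))
    (hXne : X.Nonempty) (hXcomp : IsCompact X) (hXconv : Convex ℝ X)
    (f : EuclideanSpace ℝ (Fin n) → ℝ)
    (hfconv : ConvexOn ℝ Set.univ f) (hfcont : Continuous f)
    (x0 : EuclideanSpace ℝ (Fin n)) (hx0 : x0 ∈ X)
    (fbar : ℝ) (hfbar : fbar = f x0)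
    (Xbar : Set (WithLp 2 (EuclideanSpace ℝ (Fin n) × ℝ)))
    (hXbar : Xbar = {p : WithLp 2 (EuclideanSpace ℝ (Fin n) × ℝ) |
        (WithLp.equiv 2 (EuclideanSpace ℝ (Fin n) × ℝ) p).1 ∈ X ∧
        f (WithLp.equiv 2 (EuclideanSpace ℝ (Fin n) × ℝ) p).1 ≤
          (WithLp.equiv 2 (EuclideanSpace ℝ (Fin n) × ℝ) p).2 ∧
        (WithLp.equiv 2 (EuclideanSpace ℝ (Fin n) × ℝ) p).2 ≤ fbar})
    (cbar : WithLp 2 (EuclideanSpace ℝ (Fin n) × ℝ))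
    (hcbar : cbar = (WithLp.equiv 2 (EuclideanSpace ℝ (Fin n) × ℝ)).symm (0, 1)) :
    Xbar.Nonempty ∧ IsCompact Xbar ∧ Convex ℝ Xbar ∧
      ∃ v : ℝ, IsLeast (f '' X) v ∧ IsLeast ((fun p => ⟪cbar, p⟫) '' Xbar) v ∧
        ∀ (p0 : WithLp 2 (EuclideanSpace ℝ (Fin n) × ℝ))
          (P : ℝ → WithLp 2 (EuclideanSpace ℝ (Fin n) × ℝ)),
          (∀ τ : ℝ, P τ ∈ Xbar ∧
            ∀ z ∈ Xbar, dist (p0 - τ • cbar) (P τ) ≤ dist (p0 - τ • cbar) z) →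
          Tendsto (fun τ : ℝ => ⟪cbar, P τ⟫) atTop (nhds v) := by
  -- membership characterization
  have hmem : ∀ p : WithLp 2 (EuclideanSpace ℝ (Fin n) × ℝ),
      p ∈ Xbar ↔ p.fst ∈ X ∧ f p.fst ≤ p.snd ∧ p.snd ≤ fbar := by
    intro p; rw [hXbar]; exact Iff.rfl
  -- the inner product with cbar is the last coordinate
  have hin : ∀ p : WithLp 2 (EuclideanSpace ℝ (Fin n) × ℝ), ⟪cbar, p⟫ = p.snd := by
    intro p; rw [hcbar]; simp [WithLp.prod_inner_apply]
  -- minimizer of f on X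
  obtain ⟨xs, hxsX, hxs⟩ := hXcomp.exists_isMinOn hXne hfcont.continuousOn
  set v := f xs with hv
  have hvle : ∀ x ∈ X, v ≤ f x := fun x hx => hxs hx
  have hvfbar : v ≤ fbar := hfbar ▸ hvle x0 hx0
  -- the special point z* = (xs, v)
  set zs : WithLp 2 (EuclideanSpace ℝ (Fin n) × ℝ) := (WithLp.equiv 2 (EuclideanSpace ℝ (Fin n) × ℝ)).symm (xs, v) with hzs
  have hzs1 : zs.fst = xs := rfl
  have hzs2 : zs.snd = v := rfl
  have hzsmem : zs ∈ Xbar := (hmem zs).2 ⟨hxsX, le_refl v, hvfbar⟩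
  -- nonempty
  have hne : Xbar.Nonempty := ⟨zs, hzsmem⟩
  refine ⟨hne, ?_, ?_, v, ?_, ?_, ?_⟩
  · -- compact
    set L := WithLp.prodContinuousLinearEquiv 2 ℝ (EuclideanSpace ℝ (Fin n)) ℝ with hL
    set S : Set (EuclideanSpace ℝ (Fin n) × ℝ) := {q | q.fst ∈ X ∧ f q.fst ≤ q.snd ∧ q.snd ≤ fbar} with hS
    have hScomp : IsCompact S := by
      apply IsCompact.of_isClosed_subset (hXcomp.prod (isCompact_Icc (a := v) (b := fbar)))
      · exact ((hXcomp.isClosed.preimage continuous_fst).inter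
          ((isClosed_le (hfcont.comp continuous_fst) continuous_snd).inter
            (isClosed_le continuous_snd continuous_const)))
      · rintro ⟨x, ξ⟩ ⟨hx, h1, h2⟩
        exact ⟨hx, le_trans (hvle x hx) h1, h2⟩
    have hXbarEq : Xbar = ⇑L.symm '' S := by
      rw [L.symm.image_eq_preimage_symm]
      ext p
      rw [hmem p]
      exact Iff.rfl
    rw [hXbarEq]
    exact hScomp.image L.symm.continuous
  · -- convex
    intro p hp q hq a b ha hb hab
    rw [hmem] at hp hq ⊢
    obtain ⟨hp1, hp2, hp3⟩ := hp
    obtain ⟨hq1, hq2, hq3⟩ := hq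
    have h1 : (a • p + b • q).fst = a • p.fst + b • q.fst := rfl
    have h2 : (a • p + b • q).snd = a * p.snd + b * q.snd := rfl
    refine ⟨h1 ▸ hXconv hp1 hq1 ha hb hab, ?_, ?_⟩
    · rw [h1, h2]
      calc f (a • p.fst + b • q.fst) ≤ a * f p.fst + b * f q.fst :=
            hfconv.2 (Set.mem_univ _) (Set.mem_univ _) ha hb hab
        _ ≤ a * p.snd + b * q.snd := by
            gcongr
    · rw [h2]
      calc a * p.snd + b * q.snd ≤ a * fbar + b * fbar := by gcongr
        _ = fbar := by rw [← add_mul, hab, one_mul]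
  · -- IsLeast (f '' X) v
    exact ⟨⟨xs, hxsX, rfl⟩, by rintro _ ⟨x, hx, rfl⟩; exact hvle x hx⟩
  · -- IsLeast (inner image) v
    refine ⟨⟨zs, hzsmem, hin zs⟩, ?_⟩
    rintro _ ⟨p, hp, rfl⟩
    rw [hmem] at hp
    simp only [hin]
    exact le_trans (hvle p.fst hp.1) hp.2.1
  · -- limit
    intro p0 P hP
    set C := ‖p0 - zs‖ ^ 2 with hC
    have hlow : ∀ τ : ℝ, v ≤ ⟪cbar, P τ⟫ := by
      intro τ
      have hp := (hmem (P τ)).1 (hP τ).1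
      rw [hin]
      exact le_trans (hvle _ hp.1) hp.2.1
    have hup : ∀ τ : ℝ, 0 < τ → ⟪cbar, P τ⟫ ≤ v + C / 2 * τ⁻¹ := by
      intro τ hτ
      have hd := (hP τ).2 zs hzsmem
      have e1 : ⟪p0 - P τ, cbar⟫ = ⟪cbar, p0⟫ - ⟪cbar, P τ⟫ := by
        rw [real_inner_comm, inner_sub_right]
      have e2 : ⟪p0 - zs, cbar⟫ = ⟪cbar, p0⟫ - v := by
        rw [real_inner_comm, inner_sub_right, hin zs, hzs2]
      have exp1 : ‖p0 - P τ - τ • cbar‖ ^ 2 =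
          ‖p0 - P τ‖ ^ 2 - 2 * (τ * (⟪cbar, p0⟫ - ⟪cbar, P τ⟫)) + ‖τ • cbar‖ ^ 2 := by
        rw [norm_sub_sq_real (p0 - P τ), real_inner_smul_right, e1]
      have exp2 : ‖p0 - zs - τ • cbar‖ ^ 2 =
          ‖p0 - zs‖ ^ 2 - 2 * (τ * (⟪cbar, p0⟫ - v)) + ‖τ • cbar‖ ^ 2 := by
        rw [norm_sub_sq_real (p0 - zs), real_inner_smul_right, e2]
      have hd2 : ‖p0 - P τ - τ • cbar‖ ^ 2 ≤ ‖p0 - zs - τ • cbar‖ ^ 2 := by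
        have h' : ‖p0 - τ • cbar - P τ‖ ≤ ‖p0 - τ • cbar - zs‖ := by
          simpa [dist_eq_norm] using hd
        rw [sub_right_comm p0 (τ • cbar) (P τ), sub_right_comm p0 (τ • cbar) zs] at h'
        exact pow_le_pow_left₀ (norm_nonneg _) h' 2
      rw [exp1, exp2] at hd2
      have hnn : (0:ℝ) ≤ ‖p0 - P τ‖ ^ 2 := sq_nonneg _
      have hτ' : τ * τ⁻¹ = 1 := mul_inv_cancel₀ (ne_of_gt hτ)
      have hinv : (0:ℝ) ≤ τ⁻¹ := inv_nonneg.mpr hτ.le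
      nlinarith [hd2, hnn, hτ', hinv, mul_nonneg hinv hnn,
        mul_nonneg hinv (sub_nonneg.mpr hd2)]
    have htop : Tendsto (fun τ : ℝ => v + C / 2 * τ⁻¹) atTop (nhds v) := by
      have := tendsto_const_nhds (x := v) (f := atTop (α := ℝ)) |>.add
        ((tendsto_inv_atTop_zero).const_mul (C / 2))
      simpa using this
    refine tendsto_of_tendsto_of_tendsto_of_le_of_le' tendsto_const_nhds htop ?_ ?_
    · exact Eventually.of_forall hlow
    · filter_upwards [eventually_gt_atTop (0:ℝ)] with τ hτ using hup τ hτ
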